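/- For all integers r ≥ 3 and n ≥ 2r−1 such that r−1 divides n−1, ex^conn_r(n,BP_3) = (n−1)/(r−1); moreover, the unique extremal hypergraph is the star hypergraph: there is a vertex c contained in every hyperedge, and the sets e∖{c} over all hyperedges e partition the remaining n−1 vertices into (n−1)/(r−1) sets of size r−1. -/

import Mathlib

namespace Berge

def IsBergePath {n : ℕ} (E : Finset (Finset (Fin n))) (k : ℕ)
    (v : Fin (k + 1) → Fin n) (f : Fin k → Finset (Fin n)) : Prop :=
  Function.Injective v ∧ Function.Injective f ∧ (∀ i, f i ∈ E) ∧
    ∀ i : Fin k, v i.castSucc ∈ f i ∧ v i.succ ∈ f i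

def HasBergePath {n : ℕ} (E : Finset (Finset (Fin n))) (k : ℕ) : Prop :=
  ∃ v f, IsBergePath E k v f

def BPFree {n : ℕ} (E : Finset (Finset (Fin n))) (k : ℕ) : Prop :=
  ¬ HasBergePath E k

def Connected {n : ℕ} (E : Finset (Finset (Fin n))) : Prop :=
  ∀ x y : Fin n, ∃ (k : ℕ) (v : Fin (k + 1) → Fin n) (f : Fin k → Finset (Fin n)),
    IsBergePath E k v f ∧ (∃ i, v i = x) ∧ (∃ i, v i = y)

def Uniform {n : ℕ} (E : Finset (Finset (Fin n))) (r : ℕ) : Prop :=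
  ∀ e ∈ E, e.card = r

noncomputable def exConn (n r k : ℕ) : ℕ :=
  sSup {m | ∃ E : Finset (Finset (Fin n)),
    Uniform E r ∧ Connected E ∧ BPFree E k ∧ E.card = m}

def IsBergeCycle {n : ℕ} (E : Finset (Finset (Fin n))) (k : ℕ)
    (v : Fin k → Fin n) (f : Fin k → Finset (Fin n)) : Prop :=
  Function.Injective v ∧ Function.Injective f ∧ (∀ i, f i ∈ E) ∧
    ∀ i : Fin k, v i ∈ f i ∧ v ⟨(i.val + 1) % k, Nat.mod_lt _ i.pos⟩ ∈ f i


lemma hasBP3 {n : ℕ} {E : Finset (Finset (Fin n))} {a b c d : Fin n}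
    {e1 e2 e3 : Finset (Fin n)}
    (he1 : e1 ∈ E) (he2 : e2 ∈ E) (he3 : e3 ∈ E)
    (hab : a ≠ b) (hac : a ≠ c) (had : a ≠ d) (hbc : b ≠ c) (hbd : b ≠ d) (hcd : c ≠ d)
    (h12 : e1 ≠ e2) (h13 : e1 ≠ e3) (h23 : e2 ≠ e3)
    (ha1 : a ∈ e1) (hb1 : b ∈ e1) (hb2 : b ∈ e2) (hc2 : c ∈ e2) (hc3 : c ∈ e3)
    (hd3 : d ∈ e3) : HasBergePath E 3 := by
  refine ⟨![a,b,c,d], ![e1,e2,e3], ?_, ?_, ?_, ?_⟩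
  · intro i j h
    fin_cases i <;> fin_cases j <;> simp_all
  · intro i j h
    fin_cases i <;> fin_cases j <;> simp_all
  · intro i; fin_cases i <;> simp_all
  · intro i
    fin_cases i <;> refine ⟨?_, ?_⟩ <;>
      simp [Fin.castSucc, Fin.succ, Fin.castAdd, Fin.castLE, Fin.isValue] <;> simp_all

lemma hasBP3_of_long {n k : ℕ} {E : Finset (Finset (Fin n))} (hk : 3 ≤ k)
    {v : Fin (k+1) → Fin n} {f : Fin k → Finset (Fin n)}
    (h : IsBergePath E k v f) : HasBergePath E 3 := by
  obtain ⟨hv, hf, hfe, hm⟩ := h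
  refine ⟨fun i => v ⟨i.val, by omega⟩, fun i => f ⟨i.val, by omega⟩, ?_, ?_, ?_, ?_⟩
  · intro i j hij
    have h2 := hv hij
    exact Fin.ext (by simpa using congrArg Fin.val h2)
  · intro i j hij
    have h2 := hf hij
    exact Fin.ext (by simpa using congrArg Fin.val h2)
  · intro i; exact hfe _
  · intro i
    have h1 := hm ⟨i.val, by omega⟩
    exact ⟨h1.1, h1.2⟩

lemma cover {n : ℕ} {E : Finset (Finset (Fin n))} (hconn : Connected E) (hn : 2 ≤ n)
    (x : Fin n) : ∃ e ∈ E, x ∈ e := by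
  have hy : ∃ y : Fin n, y ≠ x := by
    by_cases hx : x = ⟨0, by omega⟩
    · exact ⟨⟨1, by omega⟩, by simp [hx, Fin.ext_iff]⟩
    · exact ⟨⟨0, by omega⟩, fun h => hx h.symm⟩
  obtain ⟨y, hyx⟩ := hy
  obtain ⟨k, v, f, ⟨hv, hf, hfe, hm⟩, ⟨i, hi⟩, ⟨j, hj⟩⟩ := hconn x y
  have hk : 1 ≤ k := by
    by_contra h
    have hk0 : k = 0 := by omega
    subst hk0
    have : i = j := Fin.ext (by omega)
    exact hyx (by rw [← hj, ← this, hi])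
  by_cases hik : i.val < k
  · refine ⟨f ⟨i.val, hik⟩, hfe _, ?_⟩
    have h1 := (hm ⟨i.val, hik⟩).1
    have : (⟨i.val, hik⟩ : Fin k).castSucc = i := Fin.ext rfl
    rw [this] at h1; rw [hi] at h1; exact h1
  · have hik' : i.val = k := by omega
    refine ⟨f ⟨k - 1, by omega⟩, hfe _, ?_⟩
    have h1 := (hm ⟨k - 1, by omega⟩).2
    have : (⟨k - 1, by omega⟩ : Fin k).succ = i := Fin.ext (by simp; omega)
    rw [this] at h1; rw [hi] at h1; exact h1

lemma exists_mem_ne {n : ℕ} {e : Finset (Fin n)} {r : ℕ} (hc : e.card = r) (hr : 3 ≤ r)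
    (x : Fin n) : ∃ s ∈ e, s ≠ x := by
  have h1 : (e.erase x).Nonempty := by
    rw [← Finset.card_pos]
    have h2 := Finset.pred_card_le_card_erase (s := e) (a := x)
    omega
  obtain ⟨s, hs⟩ := h1
  exact ⟨s, Finset.mem_of_mem_erase hs, Finset.ne_of_mem_erase hs⟩

lemma exists_mem_ne2 {n : ℕ} {e : Finset (Fin n)} {r : ℕ} (hc : e.card = r) (hr : 3 ≤ r)
    (x y : Fin n) : ∃ s ∈ e, s ≠ x ∧ s ≠ y := by
  have h1 : ((e.erase x).erase y).Nonempty := by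
    rw [← Finset.card_pos]
    have h2 := Finset.pred_card_le_card_erase (s := e) (a := x)
    have h3 := Finset.pred_card_le_card_erase (s := e.erase x) (a := y)
    omega
  obtain ⟨s, hs⟩ := h1
  exact ⟨s, Finset.mem_of_mem_erase (Finset.mem_of_mem_erase hs),
    Finset.ne_of_mem_erase (Finset.mem_of_mem_erase hs), Finset.ne_of_mem_erase hs⟩

lemma exists_mem_ne3 {n : ℕ} {e : Finset (Fin n)} {r : ℕ} (hc : e.card = r) (hr : 3 ≤ r)
    {x y z : Fin n} (hsub : ¬ ({x, y, z} : Finset (Fin n)) ⊆ e ∨ ¬ e ⊆ {x, y, z}) :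
    ∃ s ∈ e, s ≠ x ∧ s ≠ y ∧ s ≠ z := by
  have h1 : (((e.erase x).erase y).erase z).Nonempty := by
    rw [← Finset.card_pos]
    by_contra h
    have h0 : ((e.erase x).erase y).erase z = ∅ := by
      rw [← Finset.card_eq_zero]; omega
    have hsub' : e ⊆ {x, y, z} := by
      intro s hs
      by_contra hns
      simp only [Finset.mem_insert, Finset.mem_singleton, not_or] at hns
      have : s ∈ ((e.erase x).erase y).erase z :=
        Finset.mem_erase.mpr ⟨hns.2.2, Finset.mem_erase.mpr ⟨hns.2.1,
          Finset.mem_erase.mpr ⟨hns.1, hs⟩⟩⟩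
      simp [h0] at this
    rcases hsub with h' | h'
    · have : ({x, y, z} : Finset (Fin n)) ⊆ e := by
        have hcard : ({x, y, z} : Finset (Fin n)).card ≤ 3 :=
          (Finset.card_insert_le _ _).trans (by
            exact le_trans (Nat.add_le_add_right (Finset.card_insert_le _ _) 1) (by simp))
        have := Finset.card_le_card hsub'
        have : e = {x, y, z} := Finset.eq_of_subset_of_card_le hsub' (by omega)
        rw [this]
      exact h' this
    · exact h' hsub'
  obtain ⟨s, hs⟩ := h1
  have hs1 := Finset.mem_of_mem_erase hs
  have hs2 := Finset.mem_of_mem_erase hs1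
  exact ⟨s, Finset.mem_of_mem_erase hs2, Finset.ne_of_mem_erase hs2,
    Finset.ne_of_mem_erase hs1, Finset.ne_of_mem_erase hs⟩

-- middle: g meets disjoint e and f
lemma middle {n r : ℕ} {E : Finset (Finset (Fin n))} {e f g : Finset (Fin n)} {a b : Fin n}
    (hu : Uniform E r) (hr : 3 ≤ r)
    (he : e ∈ E) (hf : f ∈ E) (hg : g ∈ E) (hdisj : e ∩ f = ∅)
    (hag : a ∈ g) (hae : a ∈ e) (hbg : b ∈ g) (hbf : b ∈ f) : HasBergePath E 3 := by
  have hdis : ∀ x, x ∈ e → x ∉ f := by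
    intro x hx hx'
    have : x ∈ e ∩ f := Finset.mem_inter.mpr ⟨hx, hx'⟩
    simp [hdisj] at this
  have hab : a ≠ b := fun h => hdis a hae (h ▸ hbf)
  obtain ⟨x, hxe, hxa⟩ := exists_mem_ne (hu e he) hr a
  obtain ⟨y, hyf, hyb, hyx⟩ := exists_mem_ne2 (hu f hf) hr b x
  exact hasBP3 (a := x) (b := a) (c := b) (d := y) (e1 := e) (e2 := g) (e3 := f)
    he hg hf hxa (fun h => hdis x hxe (h ▸ hbf)) hyx.symm hab
    (fun h => hdis a hae (h ▸ hyf)) hyb.symm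
    (fun h => hdis b (h ▸ hbg) hbf) (fun h => hdis a hae (h ▸ hae))
    (fun h => hdis a hae (h ▸ hag))
    hxe hae hag hbg hbf hyf

lemma link2 {n r : ℕ} {E : Finset (Finset (Fin n))} {e f g0 g1 : Finset (Fin n)}
    {x y w : Fin n}
    (hu : Uniform E r) (hr : 3 ≤ r)
    (he : e ∈ E) (hf : f ∈ E) (hg0 : g0 ∈ E) (hg1 : g1 ∈ E) (hdisj : e ∩ f = ∅)
    (hxe : x ∈ e) (hxg : x ∈ g0) (hyf : y ∈ f) (hyg : y ∈ g1)
    (hwg0 : w ∈ g0) (hwg1 : w ∈ g1) (hg01 : g0 ≠ g1) (hwx : w ≠ x) (hwy : w ≠ y) :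
    HasBergePath E 3 := by
  have hdis : ∀ z, z ∈ e → z ∉ f := by
    intro z hz hz'
    have : z ∈ e ∩ f := Finset.mem_inter.mpr ⟨hz, hz'⟩
    simp [hdisj] at this
  by_cases hyg0 : y ∈ g0
  · exact middle hu hr he hf hg0 hdisj hxg hxe hyg0 hyf
  by_cases hxg1 : x ∈ g1
  · exact middle hu hr he hf hg1 hdisj hxg1 hxe hyg hyf
  by_cases hwe : w ∈ e
  · exact middle hu hr he hf hg1 hdisj hwg1 hwe hyg hyf
  by_cases hwf : w ∈ f
  · exact middle hu hr he hf hg0 hdisj hxg hxe hwg0 hwf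
  -- now: path s - e - x - g0 - w - g1 - t
  obtain ⟨s, hse, hsx⟩ := exists_mem_ne (hu e he) hr x
  obtain ⟨t, htg1, htw, hts⟩ := exists_mem_ne2 (hu g1 hg1) hr w s
  have hxy : x ≠ y := fun h => hdis x hxe (h ▸ hyf)
  exact hasBP3 (a := s) (b := x) (c := w) (d := t) (e1 := e) (e2 := g0) (e3 := g1)
    he hg0 hg1 hsx (fun h => hwe (h ▸ hse)) hts.symm hwx.symm
    (fun h => hxg1 (h ▸ htg1)) htw.symm
    (fun h => hwe (h ▸ hwg0)) (fun h => hdis y (h ▸ hyg) hyf)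
    hg01
    hse hxe hxg hwg0 hwg1 htg1

lemma inter_nonempty {n r : ℕ} {E : Finset (Finset (Fin n))} {e f : Finset (Fin n)}
    (hu : Uniform E r) (hr : 3 ≤ r) (hconn : Connected E) (hbp : BPFree E 3)
    (he : e ∈ E) (hf : f ∈ E) : (e ∩ f).Nonempty := by
  by_contra hne
  have hdisj : e ∩ f = ∅ := Finset.not_nonempty_iff_eq_empty.mp hne
  have hdis : ∀ z, z ∈ e → z ∉ f := by
    intro z hz hz'
    have : z ∈ e ∩ f := Finset.mem_inter.mpr ⟨hz, hz'⟩
    simp [hdisj] at this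
  have hene : e.Nonempty := by
    rw [← Finset.card_pos, hu e he]; omega
  obtain ⟨x, hxe⟩ := hene
  have hfne : f.Nonempty := by
    rw [← Finset.card_pos, hu f hf]; omega
  obtain ⟨y, hyf⟩ := hfne
  have hxy : x ≠ y := fun h => hdis x hxe (h ▸ hyf)
  obtain ⟨k, v, fp, hp, ⟨i, hi⟩, ⟨j, hj⟩⟩ := hconn x y
  obtain ⟨hv, hfinj, hfe, hm⟩ := hp
  have hk3 : k < 3 := by
    by_contra h
    exact hbp (hasBP3_of_long (by omega) ⟨hv, hfinj, hfe, hm⟩)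
  have hk1 : 1 ≤ k := by
    by_contra h
    have hk0 : k = 0 := by omega
    subst hk0
    exact hxy (by rw [← hi, ← hj]; congr 1; exact Fin.ext (by omega))
  have hij : i ≠ j := fun h => hxy (by rw [← hi, ← hj, h])
  interval_cases k
  · -- k = 1
    have h00 : v ⟨0, by omega⟩ ∈ fp ⟨0, by omega⟩ := (hm ⟨0, by omega⟩).1
    have h10 : v ⟨1, by omega⟩ ∈ fp ⟨0, by omega⟩ := (hm ⟨0, by omega⟩).2
    have hx0 : x ∈ fp ⟨0, by omega⟩ := by
      obtain ⟨iv, hiv⟩ := i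
      interval_cases iv
      · rw [← hi]; exact h00
      · rw [← hi]; exact h10
    have hy0 : y ∈ fp ⟨0, by omega⟩ := by
      obtain ⟨jv, hjv⟩ := j
      interval_cases jv
      · rw [← hj]; exact h00
      · rw [← hj]; exact h10
    exact hbp (middle hu hr he hf (hfe _) hdisj hx0 hxe hy0 hyf)
  · -- k = 2
    have h00 : v ⟨0, by omega⟩ ∈ fp ⟨0, by omega⟩ := (hm ⟨0, by omega⟩).1
    have h10 : v ⟨1, by omega⟩ ∈ fp ⟨0, by omega⟩ := (hm ⟨0, by omega⟩).2
    have h11 : v ⟨1, by omega⟩ ∈ fp ⟨1, by omega⟩ := (hm ⟨1, by omega⟩).1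
    have h21 : v ⟨2, by omega⟩ ∈ fp ⟨1, by omega⟩ := (hm ⟨1, by omega⟩).2
    have hg01 : fp ⟨0, by omega⟩ ≠ fp ⟨1, by omega⟩ := by
      intro h
      have := hfinj h
      simp [Fin.ext_iff] at this
    have hw1x : v ⟨1, by omega⟩ = x → x ∈ fp ⟨0, by omega⟩ ∧ x ∈ fp ⟨1, by omega⟩ := by
      intro h; exact ⟨h ▸ h10, h ▸ h11⟩
    obtain ⟨iv, hiv⟩ := i
    obtain ⟨jv, hjv⟩ := j
    have hivjv : iv ≠ jv := fun h => hij (Fin.ext h)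
    interval_cases iv <;> interval_cases jv <;> simp_all [-Fin.forall_fin_two]
    · -- (0,1) : x, y ∈ fp 0
      exact hbp (middle hu hr he hf (hfe 0) hdisj h00 hxe h10 hyf)
    · -- (0,2) : x ∈ fp 0, y ∈ fp 1, w = v 1
      refine hbp (link2 hu hr he hf (hfe 0) (hfe 1) hdisj hxe h00 hyf h21 h10 h11 hg01 ?_ ?_)
      · intro h
        have h2 := hv (h.trans hi.symm)
        simp [Fin.ext_iff] at h2
      · intro h
        have h2 := hv (h.trans hj.symm)
        simp [Fin.ext_iff] at h2
    · -- (1,0) : x, y ∈ fp 0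
      exact hbp (middle hu hr he hf (hfe 0) hdisj h10 hxe h00 hyf)
    · -- (1,2) : x, y ∈ fp 1
      exact hbp (middle hu hr he hf (hfe 1) hdisj h11 hxe h21 hyf)
    · -- (2,0) : x ∈ fp 1, y ∈ fp 0, w = v 1
      refine hbp (link2 hu hr he hf (hfe 1) (hfe 0) hdisj hxe h21 hyf h00 h11 h10 (Ne.symm hg01) ?_ ?_)
      · intro h
        have h2 := hv (h.trans hi.symm)
        simp [Fin.ext_iff] at h2
      · intro h
        have h2 := hv (h.trans hj.symm)
        simp [Fin.ext_iff] at h2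
    · -- (2,1) : x, y ∈ fp 1
      exact hbp (middle hu hr he hf (hfe 1) hdisj h21 hxe h11 hyf)

lemma inter_subsingleton {n r : ℕ} {E : Finset (Finset (Fin n))}
    (hu : Uniform E r) (hr : 3 ≤ r) (hconn : Connected E) (hbp : BPFree E 3)
    (hcard : 3 ≤ E.card) {e f : Finset (Fin n)} (he : e ∈ E) (hf : f ∈ E) (hef : e ≠ f)
    {a b : Fin n} (hae : a ∈ e) (haf : a ∈ f) (hbe : b ∈ e) (hbf : b ∈ f) : a = b := by
  by_contra hab
  -- third edge g
  obtain ⟨g, hg⟩ : ((E.erase e).erase f).Nonempty := by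
    rw [← Finset.card_pos]
    have h2 := Finset.pred_card_le_card_erase (s := E) (a := e)
    have h3 := Finset.pred_card_le_card_erase (s := E.erase e) (a := f)
    omega
  have hgf : g ≠ f := Finset.ne_of_mem_erase hg
  have hge : g ≠ e := Finset.ne_of_mem_erase (Finset.mem_of_mem_erase hg)
  have hgE : g ∈ E := Finset.mem_of_mem_erase (Finset.mem_of_mem_erase hg)
  by_cases hA : ∃ p, p ∈ g ∧ p ∈ e ∧ p ≠ a ∧ p ≠ b
  · obtain ⟨p, hpg, hpe, hpa, hpb⟩ := hA
    obtain ⟨d, hdg, hda, hdb, hdp⟩ := exists_mem_ne3 (hu g hgE) hr (x := a) (y := b) (z := p)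
      (Or.inr (by
        intro hsub
        have hsub2 : g ⊆ e := by
          intro z hz
          have := hsub hz
          simp only [Finset.mem_insert, Finset.mem_singleton] at this
          rcases this with rfl | rfl | rfl <;> assumption
        exact hge (Finset.eq_of_subset_of_card_le hsub2 (by rw [hu e he, hu g hgE]))))
    exact hbp (hasBP3 (a := b) (b := a) (c := p) (d := d) (e1 := f) (e2 := e) (e3 := g)
      hf he hgE (Ne.symm hab) (Ne.symm hpb) (Ne.symm hdb) (Ne.symm hpa) (Ne.symm hda)
      (Ne.symm hdp) (Ne.symm hef) (Ne.symm hgf) (Ne.symm hge)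
      hbf haf hae hpe hpg hdg)
  by_cases hB : ∃ p, p ∈ g ∧ p ∈ f ∧ p ≠ a ∧ p ≠ b
  · obtain ⟨p, hpg, hpf, hpa, hpb⟩ := hB
    obtain ⟨d, hdg, hda, hdb, hdp⟩ := exists_mem_ne3 (hu g hgE) hr (x := a) (y := b) (z := p)
      (Or.inr (by
        intro hsub
        have hsub2 : g ⊆ f := by
          intro z hz
          have := hsub hz
          simp only [Finset.mem_insert, Finset.mem_singleton] at this
          rcases this with rfl | rfl | rfl <;> assumption
        exact hgf (Finset.eq_of_subset_of_card_le hsub2 (by rw [hu f hf, hu g hgE]))))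
    exact hbp (hasBP3 (a := b) (b := a) (c := p) (d := d) (e1 := e) (e2 := f) (e3 := g)
      he hf hgE (Ne.symm hab) (Ne.symm hpb) (Ne.symm hdb) (Ne.symm hpa) (Ne.symm hda)
      (Ne.symm hdp) hef (Ne.symm hge) (Ne.symm hgf)
      hbe hae haf hpf hpg hdg)
  push_neg at hA hB
  have habg : a ∈ g ∨ b ∈ g := by
    obtain ⟨q, hq⟩ := inter_nonempty hu hr hconn hbp hgE he
    rw [Finset.mem_inter] at hq
    by_cases hqa : q = a
    · exact Or.inl (hqa ▸ hq.1)
    · exact Or.inr ((hA q hq.1 hq.2 hqa) ▸ hq.1)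
  obtain ⟨x, hxg, hxa, hxb⟩ := exists_mem_ne2 (hu g hgE) hr a b
  have hxe : x ∉ e := fun h => hxb (hA x hxg h hxa)
  have hxf : x ∉ f := fun h => hxb (hB x hxg h hxa)
  obtain ⟨y, hyf, hya, hyb⟩ := exists_mem_ne2 (hu f hf) hr a b
  have hxy : x ≠ y := fun h => hxf (h ▸ hyf)
  rcases habg with hag | hbg
  · exact hbp (hasBP3 (a := x) (b := a) (c := b) (d := y) (e1 := g) (e2 := e) (e3 := f)
      hgE he hf hxa hxb hxy hab (Ne.symm hya) (Ne.symm hyb)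
      hge hgf hef hxg hag hae hbe hbf hyf)
  · exact hbp (hasBP3 (a := x) (b := b) (c := a) (d := y) (e1 := g) (e2 := e) (e3 := f)
      hgE he hf hxb hxa hxy (Ne.symm hab) (Ne.symm hyb) (Ne.symm hya)
      hge hgf hef hxg hbg hbe hae haf hyf)

lemma star_structure {n r : ℕ} {E : Finset (Finset (Fin n))}
    (hu : Uniform E r) (hr : 3 ≤ r) (hconn : Connected E) (hbp : BPFree E 3)
    (hcard : 3 ≤ E.card) :
    ∃ c : Fin n, (∀ e ∈ E, c ∈ e) ∧ (∀ e ∈ E, ∀ f ∈ E, e ≠ f → e ∩ f = {c}) := by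
  obtain ⟨e1, he1, e2, he2, h12⟩ : ∃ e1 ∈ E, ∃ e2 ∈ E, e1 ≠ e2 :=
    Finset.one_lt_card.mp (by omega)
  obtain ⟨c, hc⟩ := inter_nonempty hu hr hconn hbp he1 he2
  rw [Finset.mem_inter] at hc
  have hcomm : ∀ g ∈ E, c ∈ g := by
    intro g hgE
    by_contra hcg
    have hge1 : g ≠ e1 := fun h => hcg (h ▸ hc.1)
    have hge2 : g ≠ e2 := fun h => hcg (h ▸ hc.2)
    obtain ⟨p, hp⟩ := inter_nonempty hu hr hconn hbp hgE he1
    rw [Finset.mem_inter] at hp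
    obtain ⟨q, hq⟩ := inter_nonempty hu hr hconn hbp hgE he2
    rw [Finset.mem_inter] at hq
    have hpc : p ≠ c := fun h => hcg (h ▸ hp.1)
    have hqc : q ≠ c := fun h => hcg (h ▸ hq.1)
    have hpq : p ≠ q := by
      intro h
      subst h
      exact hpc (inter_subsingleton hu hr hconn hbp hcard he1 he2 h12 hp.2 hq.2 hc.1 hc.2)
    have hpe2 : p ∉ e2 := by
      intro h
      exact hpc (inter_subsingleton hu hr hconn hbp hcard he1 he2 h12 hp.2 h hc.1 hc.2)
    obtain ⟨d, hde2, hdc, hdq⟩ := exists_mem_ne2 (hu e2 he2) hr c q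
    have hdp : d ≠ p := fun h => hpe2 (h ▸ hde2)
    exact hbp (hasBP3 (a := c) (b := p) (c := q) (d := d) (e1 := e1) (e2 := g) (e3 := e2)
      he1 hgE he2 (Ne.symm hpc) (Ne.symm hqc) (Ne.symm hdc) hpq (Ne.symm hdp) (Ne.symm hdq)
      (Ne.symm hge1) h12 hge2
      hc.1 hp.2 hp.1 hq.1 hq.2 hde2)
  refine ⟨c, hcomm, ?_⟩
  intro e he f hf hef
  ext z
  simp only [Finset.mem_inter, Finset.mem_singleton]
  constructor
  · rintro ⟨hze, hzf⟩
    exact inter_subsingleton hu hr hconn hbp hcard he hf hef hze hzf (hcomm e he) (hcomm f hf)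
  · rintro rfl
    exact ⟨hcomm e he, hcomm f hf⟩

lemma card_bound {n r : ℕ} {E : Finset (Finset (Fin n))} {c : Fin n}
    (hu : Uniform E r) (hr : 3 ≤ r)
    (hc : ∀ e ∈ E, c ∈ e) (hint : ∀ e ∈ E, ∀ f ∈ E, e ≠ f → e ∩ f = {c}) :
    E.card * (r - 1) ≤ n - 1 := by
  have hdisj : ∀ e ∈ E, ∀ f ∈ E, e ≠ f → Disjoint (e.erase c) (f.erase c) := by
    intro e he f hf hef
    rw [Finset.disjoint_left]
    intro z hz hz'
    have : z ∈ e ∩ f := Finset.mem_inter.mpr ⟨Finset.mem_of_mem_erase hz, Finset.mem_of_mem_erase hz'⟩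
    rw [hint e he f hf hef] at this
    exact Finset.ne_of_mem_erase hz (Finset.mem_singleton.mp this)
  have hbi := Finset.card_biUnion hdisj
  have hsub : E.biUnion (fun e => e.erase c) ⊆ Finset.univ.erase c := by
    intro z hz
    rw [Finset.mem_biUnion] at hz
    obtain ⟨e, he, hz⟩ := hz
    exact Finset.mem_erase.mpr ⟨Finset.ne_of_mem_erase hz, Finset.mem_univ z⟩
  have h1 := Finset.card_le_card hsub
  rw [hbi] at h1
  have h2 : ∀ e ∈ E, (e.erase c).card = r - 1 := by
    intro e he
    rw [Finset.card_erase_of_mem (hc e he), hu e he]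
  rw [Finset.sum_congr rfl h2, Finset.sum_const, smul_eq_mul] at h1
  have h3 : (Finset.univ.erase c).card = n - 1 := by
    rw [Finset.card_erase_of_mem (Finset.mem_univ c), Finset.card_univ, Fintype.card_fin]
  omega

lemma isBP0 {n : ℕ} {E : Finset (Finset (Fin n))} (x : Fin n) :
    IsBergePath E 0 (fun _ => x) (Fin.elim0) :=
  ⟨fun i j _ => Fin.ext (by omega), fun i => i.elim0, fun i => i.elim0, fun i => i.elim0⟩

lemma isBP1 {n : ℕ} {E : Finset (Finset (Fin n))} {x y : Fin n} {g : Finset (Fin n)}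
    (hxy : x ≠ y) (hx : x ∈ g) (hy : y ∈ g) (hg : g ∈ E) :
    IsBergePath E 1 ![x, y] ![g] := by
  refine ⟨?_, fun i j _ => Fin.ext (by omega), fun i => by fin_cases i <;> simpa, ?_⟩
  · intro i j h
    fin_cases i <;> fin_cases j <;> simp_all
  · intro i
    fin_cases i <;> exact ⟨by simpa, by simpa⟩

lemma isBP2 {n : ℕ} {E : Finset (Finset (Fin n))} {x w y : Fin n} {e f : Finset (Fin n)}
    (hxw : x ≠ w) (hxy : x ≠ y) (hwy : w ≠ y) (hef : e ≠ f)
    (hx : x ∈ e) (hwe : w ∈ e) (hwf : w ∈ f) (hy : y ∈ f)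
    (he : e ∈ E) (hf : f ∈ E) :
    IsBergePath E 2 ![x, w, y] ![e, f] := by
  refine ⟨?_, ?_, fun i => by fin_cases i <;> simpa, ?_⟩
  · intro i j h
    fin_cases i <;> fin_cases j <;> simp_all
  · intro i j h
    fin_cases i <;> fin_cases j <;> simp_all
  · intro i
    fin_cases i <;> refine ⟨?_, ?_⟩ <;>
      simp [Fin.castSucc, Fin.succ, Fin.castAdd, Fin.castLE] <;> simp_all

lemma connected_of_star {n : ℕ} {E : Finset (Finset (Fin n))} {c : Fin n}
    (hc : ∀ e ∈ E, c ∈ e) (hcov : ∀ x : Fin n, ∃ e ∈ E, x ∈ e) : Connected E := by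
  intro x y
  by_cases hxy : x = y
  · exact ⟨0, fun _ => x, Fin.elim0, isBP0 x, ⟨0, rfl⟩, ⟨0, hxy⟩⟩
  obtain ⟨f, hfE, hyf⟩ := hcov y
  by_cases hxf : x ∈ f
  · exact ⟨1, ![x, y], ![f], isBP1 hxy hxf hyf hfE, ⟨0, by simp⟩, ⟨1, by simp⟩⟩
  obtain ⟨e, heE, hxe⟩ := hcov x
  have hef : e ≠ f := fun h => hxf (h ▸ hxe)
  have hxc : x ≠ c := fun h => hxf (h ▸ hc f hfE)
  by_cases hyce : y = c
  · exact ⟨1, ![x, y], ![e], isBP1 hxy hxe (by rw [hyce]; exact hc e heE) heE,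
      ⟨0, by simp⟩, ⟨1, by simp⟩⟩
  exact ⟨2, ![x, c, y], ![e, f], isBP2 hxc hxy (fun h => hyce h.symm) hef hxe (hc e heE)
    (hc f hfE) hyf heE hfE, ⟨0, by simp⟩, ⟨2, by simp⟩⟩

lemma bpfree_of_star {n : ℕ} {E : Finset (Finset (Fin n))} {c : Fin n}
    (hint : ∀ e ∈ E, ∀ f ∈ E, e ≠ f → e ∩ f = {c}) : BPFree E 3 := by
  rintro ⟨v, f, hv, hf, hfe, hm⟩
  have h01 : f ⟨0, by omega⟩ ≠ f ⟨1, by omega⟩ := by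
    intro h
    have := hf h
    simp [Fin.ext_iff] at this
  have h12 : f ⟨1, by omega⟩ ≠ f ⟨2, by omega⟩ := by
    intro h
    have := hf h
    simp [Fin.ext_iff] at this
  have hv1 : v ⟨1, by omega⟩ ∈ f ⟨0, by omega⟩ ∩ f ⟨1, by omega⟩ :=
    Finset.mem_inter.mpr ⟨(hm ⟨0, by omega⟩).2, (hm ⟨1, by omega⟩).1⟩
  have hv2 : v ⟨2, by omega⟩ ∈ f ⟨1, by omega⟩ ∩ f ⟨2, by omega⟩ :=
    Finset.mem_inter.mpr ⟨(hm ⟨1, by omega⟩).2, (hm ⟨2, by omega⟩).1⟩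
  rw [hint _ (hfe _) _ (hfe _) h01, Finset.mem_singleton] at hv1
  rw [hint _ (hfe _) _ (hfe _) h12, Finset.mem_singleton] at hv2
  have : (⟨1, by omega⟩ : Fin 4) = ⟨2, by omega⟩ := hv (by rw [hv1, hv2])
  simp [Fin.ext_iff] at this

def blkS (n r i : ℕ) : Finset (Fin n) :=
  (Finset.Ico (1 + i * (r - 1)) (min (1 + i * (r - 1) + (r - 1)) n)).attachFin
    (fun x hx => lt_of_lt_of_le (Finset.mem_Ico.mp hx).2 (min_le_right _ _))

lemma mem_blkS {n r i : ℕ} {x : Fin n} : x ∈ blkS n r i ↔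
    1 + i * (r - 1) ≤ x.val ∧ x.val < min (1 + i * (r - 1) + (r - 1)) n := by
  simp [blkS, Finset.mem_attachFin, Finset.mem_Ico]

lemma star_exists (r n : ℕ) (hr : 3 ≤ r) (hn : 2 * r - 1 ≤ n) (hdvd : (r - 1) ∣ (n - 1)) :
    ∃ E : Finset (Finset (Fin n)), Uniform E r ∧ Connected E ∧ BPFree E 3 ∧
      E.card = (n - 1) / (r - 1) := by
  obtain ⟨m, hm⟩ := hdvd
  have hn5 : 5 ≤ n := by omega
  have hmdiv : (n - 1) / (r - 1) = m := by
    rw [hm]; exact Nat.mul_div_cancel_left m (by omega)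
  have hm2 : 2 ≤ m := by
    have h2 : (r - 1) * 2 ≤ (r - 1) * m := by omega
    exact Nat.le_of_mul_le_mul_left h2 (by omega)
  obtain ⟨c0, hc0⟩ : ∃ c0 : Fin n, c0.val = 0 := ⟨⟨0, by omega⟩, rfl⟩
  have hbound : ∀ i < m, 1 + i * (r - 1) + (r - 1) ≤ n := by
    intro i hi
    have h1 : (i + 1) * (r - 1) ≤ m * (r - 1) := Nat.mul_le_mul_right _ (by omega)
    have h2 : (i + 1) * (r - 1) = i * (r - 1) + (r - 1) := by ring
    have h3 : m * (r - 1) = (r - 1) * m := by ring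
    omega
  have hmem' : ∀ i < m, ∀ x : Fin n, x ∈ blkS n r i ↔
      1 + i * (r - 1) ≤ x.val ∧ x.val < 1 + i * (r - 1) + (r - 1) := by
    intro i hi x
    rw [mem_blkS, min_eq_left (hbound i hi)]
  have hcblk : ∀ i, c0 ∉ blkS n r i := by
    intro i h
    rw [mem_blkS, hc0] at h
    omega
  have hblkcard : ∀ i < m, (blkS n r i).card = r - 1 := by
    intro i hi
    rw [blkS, Finset.card_attachFin, Nat.card_Ico, min_eq_left (hbound i hi)]
    omega
  have hblkdisj : ∀ i < m, ∀ j < m, i ≠ j → ∀ x : Fin n,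
      x ∈ blkS n r i → x ∈ blkS n r j → False := by
    intro i hi j hj hij x hxi hxj
    rw [hmem' i hi] at hxi
    rw [hmem' j hj] at hxj
    rcases Nat.lt_or_ge i j with h | h
    · have h1 : (i + 1) * (r - 1) ≤ j * (r - 1) := Nat.mul_le_mul_right _ (by omega)
      have h2 : (i + 1) * (r - 1) = i * (r - 1) + (r - 1) := by ring
      omega
    · have hji : j < i := by omega
      have h1 : (j + 1) * (r - 1) ≤ i * (r - 1) := Nat.mul_le_mul_right _ (by omega)
      have h2 : (j + 1) * (r - 1) = j * (r - 1) + (r - 1) := by ring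
      omega
  have hblkne : ∀ i < m, (blkS n r i).Nonempty := by
    intro i hi
    rw [← Finset.card_pos, hblkcard i hi]
    omega
  have hedgeinj : ∀ i < m, ∀ j < m,
      insert c0 (blkS n r i) = insert c0 (blkS n r j) → i = j := by
    intro i hi j hj hij
    by_contra hne
    obtain ⟨x, hx⟩ := hblkne i hi
    have hx' : x ∈ insert c0 (blkS n r j) := by
      rw [← hij]; exact Finset.mem_insert_of_mem hx
    rcases Finset.mem_insert.mp hx' with h | h
    · exact hcblk i (h ▸ hx)
    · exact hblkdisj i hi j hj hne x hx h
  refine ⟨(Finset.range m).image (fun i => insert c0 (blkS n r i)), ?_, ?_, ?_, ?_⟩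
  · -- uniform
    intro e he
    rw [Finset.mem_image] at he
    obtain ⟨i, hi, rfl⟩ := he
    rw [Finset.mem_range] at hi
    rw [Finset.card_insert_of_notMem (hcblk i), hblkcard i hi]
    omega
  · -- connected
    refine connected_of_star (c := c0) ?_ ?_
    · intro e he
      rw [Finset.mem_image] at he
      obtain ⟨i, _, rfl⟩ := he
      exact Finset.mem_insert_self _ _
    · intro x
      by_cases hx0 : x = c0
      · exact ⟨insert c0 (blkS n r 0), Finset.mem_image.mpr ⟨0, Finset.mem_range.mpr (by omega), rfl⟩,
          hx0 ▸ Finset.mem_insert_self _ _⟩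
      · have hx1 : 1 ≤ x.val := by
          rcases Nat.eq_zero_or_pos x.val with h | h
          · exact absurd (Fin.ext (by rw [h, hc0])) hx0
          · omega
        have hxn : x.val < n := x.isLt
        have him : (x.val - 1) / (r - 1) < m :=
          Nat.div_lt_of_lt_mul (by omega)
        refine ⟨insert c0 (blkS n r ((x.val - 1) / (r - 1))),
          Finset.mem_image.mpr ⟨_, Finset.mem_range.mpr him, rfl⟩, ?_⟩
        apply Finset.mem_insert_of_mem
        rw [hmem' _ him]
        have hdm := Nat.div_add_mod (x.val - 1) (r - 1)
        have hmod := Nat.mod_lt (x.val - 1) (y := r - 1) (by omega)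
        have h2 : ((x.val - 1) / (r - 1)) * (r - 1) = (r - 1) * ((x.val - 1) / (r - 1)) := by
          ring
        omega
  · -- BPFree
    apply bpfree_of_star (c := c0)
    intro e he f hf hef
    rw [Finset.mem_image] at he hf
    obtain ⟨i, hi, rfl⟩ := he
    obtain ⟨j, hj, rfl⟩ := hf
    rw [Finset.mem_range] at hi hj
    have hij : i ≠ j := fun h => hef (h ▸ rfl)
    ext z
    simp only [Finset.mem_inter, Finset.mem_singleton]
    constructor
    · rintro ⟨hz1, hz2⟩
      rcases Finset.mem_insert.mp hz1 with h | h
      · exact h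
      rcases Finset.mem_insert.mp hz2 with h' | h'
      · exact h'
      · exact absurd (hblkdisj i hi j hj hij z h h') (by simp)
    · rintro rfl
      exact ⟨Finset.mem_insert_self _ _, Finset.mem_insert_self _ _⟩
  · -- card
    rw [hmdiv, Finset.card_image_of_injOn, Finset.card_range]
    intro i hi j hj hij
    rw [Finset.mem_coe, Finset.mem_range] at hi hj
    exact hedgeinj i hi j hj hij


theorem stmt1 (r n : ℕ) (hr : 3 ≤ r) (hn : 2 * r - 1 ≤ n) (hdvd : (r - 1) ∣ (n - 1)) :
    exConn n r 3 = (n - 1) / (r - 1) ∧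
    ∀ E : Finset (Finset (Fin n)), Uniform E r → Connected E → BPFree E 3 →
      E.card = (n - 1) / (r - 1) →
      ∃ c : Fin n, (∀ e ∈ E, c ∈ e) ∧
        (∀ e ∈ E, ∀ f ∈ E, e ≠ f → e ∩ f = {c}) ∧
        E.biUnion id = Finset.univ := by
  have hn5 : 5 ≤ n := by omega
  have hrm : (n - 1) / (r - 1) * (r - 1) = n - 1 := Nat.div_mul_cancel hdvd
  have hm2 : 2 ≤ (n - 1) / (r - 1) := by
    rw [Nat.le_div_iff_mul_le (by omega : 0 < r - 1)]
    omega
  have hub : ∀ E : Finset (Finset (Fin n)), Uniform E r → Connected E → BPFree E 3 →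
      E.card ≤ (n - 1) / (r - 1) := by
    intro E hu hconn hbp
    by_cases hcard : 3 ≤ E.card
    · obtain ⟨c, hc, hint⟩ := star_structure hu hr hconn hbp hcard
      have := card_bound hu hr hc hint
      rw [Nat.le_div_iff_mul_le (by omega : 0 < r - 1)]
      omega
    · omega
  constructor
  · obtain ⟨E0, hu0, hc0, hb0, hcard0⟩ := star_exists r n hr hn hdvd
    have hmem : (n - 1) / (r - 1) ∈ {m | ∃ E : Finset (Finset (Fin n)),
        Uniform E r ∧ Connected E ∧ BPFree E 3 ∧ E.card = m} :=
      ⟨E0, hu0, hc0, hb0, hcard0⟩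
    have hub' : ∀ x ∈ {m | ∃ E : Finset (Finset (Fin n)),
        Uniform E r ∧ Connected E ∧ BPFree E 3 ∧ E.card = m}, x ≤ (n - 1) / (r - 1) := by
      rintro x ⟨E, hu, hconn, hbp, rfl⟩
      exact hub E hu hconn hbp
    exact le_antisymm (csSup_le ⟨_, hmem⟩ hub') (le_csSup ⟨_, hub'⟩ hmem)
  · intro E hu hconn hbp hcard
    have hcover : E.biUnion id = Finset.univ := by
      ext x
      simp only [Finset.mem_biUnion, id, Finset.mem_univ, iff_true]
      exact cover hconn (by omega) x
    by_cases hm3 : 3 ≤ (n - 1) / (r - 1)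
    · obtain ⟨c, hc, hint⟩ := star_structure hu hr hconn hbp (by omega)
      exact ⟨c, hc, hint, hcover⟩
    · -- m = 2, n = 2r - 1
      have hmval : (n - 1) / (r - 1) = 2 := by omega
      have hneq : n = 2 * r - 1 := by
        rw [hmval] at hrm
        omega
      rw [hmval] at hcard
      obtain ⟨e, f, hef, hEef⟩ := Finset.card_eq_two.mp hcard
      have hun : e ∪ f = Finset.univ := by
        rw [← hcover, hEef]
        simp [Finset.biUnion_insert]
      have hcardint : (e ∩ f).card = 1 := by
        have h1 := Finset.card_union_add_card_inter e f
        have h2 : e.card = r := hu e (by rw [hEef]; simp)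
        have h3 : f.card = r := hu f (by rw [hEef]; simp)
        have h4 : (e ∪ f).card = n := by rw [hun, Finset.card_univ, Fintype.card_fin]
        omega
      obtain ⟨c, hc⟩ := Finset.card_eq_one.mp hcardint
      have hce : c ∈ e := Finset.mem_inter.mp (hc ▸ Finset.mem_singleton_self c) |>.1
      have hcf : c ∈ f := Finset.mem_inter.mp (hc ▸ Finset.mem_singleton_self c) |>.2
      refine ⟨c, ?_, ?_, hcover⟩
      · intro g hg
        rw [hEef] at hg
        rcases Finset.mem_insert.mp hg with rfl | hg
        · exact hce
        · rw [Finset.mem_singleton.mp hg]; exact hcf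
      · intro g hg h hh hgh
        rw [hEef] at hg hh
        rcases Finset.mem_insert.mp hg with rfl | hg' <;>
          rcases Finset.mem_insert.mp hh with rfl | hh'
        · exact absurd rfl hgh
        · rw [Finset.mem_singleton.mp hh']; exact hc
        · rw [Finset.mem_singleton.mp hg', Finset.inter_comm]; exact hc
        · rw [Finset.mem_singleton.mp hg', Finset.mem_singleton.mp hh'] at hgh
          exact absurd rfl hgh

end Berge
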